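/- In the directed model with k = ∞, if G contains no removable edge, then for every edge ab ∈ E the number of vertices reachable from b satisfies |R_G(b)| ≥ c. Consequently, any strongly connected component of G that has an incoming edge has full reachable set of size at least c. -/

import Mathlib

open Relation

variable {V : Type*} [Fintype V] [DecidableEq V]

/-- Add a directed edge `u → v`. -/
def addE (G : V → V → Prop) (u v : V) : V → V → Prop :=
  fun a b => G a b ∨ (a = u ∧ b = v)

/-- Delete the directed edge `u → v`. -/
def delE (G : V → V → Prop) (u v : V) : V → V → Prop :=
  fun a b => G a b ∧ ¬(a = u ∧ b = v)

/-- Vertices other than `v` reachable from `v` (k = ∞). -/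
def reachSet (G : V → V → Prop) (v : V) : Set V :=
  {w | w ≠ v ∧ ReflTransGen G v w}

/-- Out-degree of `v`. -/
noncomputable def outdeg (G : V → V → Prop) (v : V) : ℕ :=
  {w | G v w}.ncard

/-- Utility of agent `v`: reachable vertices minus `c` per out-edge. -/
noncomputable def util (G : V → V → Prop) (c : ℝ) (v : V) : ℝ :=
  ((reachSet G v).ncard : ℝ) - c * (outdeg G v : ℝ)

/-- `u → v` is addable: it is absent and adding it strictly increases `u`'s utility. -/
def Addable (G : V → V → Prop) (c : ℝ) (u v : V) : Prop :=
  ¬ G u v ∧ util G c u < util (addE G u v) c u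

/-- `u → v` is removable: it is present and deleting it strictly increases `u`'s utility. -/
def Removable (G : V → V → Prop) (c : ℝ) (u v : V) : Prop :=
  G u v ∧ util G c u < util (delE G u v) c u

/-- `u` and `v` lie in the same strongly connected component. -/
def SameSCC (G : V → V → Prop) (u v : V) : Prop :=
  ReflTransGen G u v ∧ ReflTransGen G v u

/-- The strongly connected component of `v`. -/
def scc (G : V → V → Prop) (v : V) : Set V := {w | SameSCC G v w}

/-- If `G` has no removable edge then for every edge `ab`, the set of vertices reachable
from `b` (including `b` itself) has size at least `c`; consequently any strongly connected
component with an incoming edge has reachable set of size at least `c`. -/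
theorem stmt4 (G : V → V → Prop) (c : ℝ) (hc : 0 < c)
    (hnorem : ∀ u v, ¬ Removable G c u v) :
    (∀ a b, G a b → c ≤ (({w | ReflTransGen G b w} : Set V).ncard : ℝ)) ∧
    (∀ a b, G a b → ∀ x, SameSCC G b x →
      c ≤ (({w | ReflTransGen G x w} : Set V).ncard : ℝ)) := by
  have reach_del_or : ∀ a b w : V, ReflTransGen G a w →
      ReflTransGen (delE G a b) a w ∨ ReflTransGen G b w := by
    intro a b w h
    induction h with
    | refl => exact Or.inl ReflTransGen.refl
    | tail hp hG ih =>
      rename_i x y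
      rcases ih with h1 | h1
      · by_cases hxy : x = a ∧ y = b
        · obtain ⟨_, rfl⟩ := hxy
          exact Or.inr ReflTransGen.refl
        · exact Or.inl (h1.tail ⟨hG, hxy⟩)
      · exact Or.inr (h1.tail hG)
  have key : ∀ a b, G a b → c ≤ (({w | ReflTransGen G b w} : Set V).ncard : ℝ) := by
    intro a b hab
    have hle : util (delE G a b) c a ≤ util G c a := by
      by_contra h
      exact hnorem a b ⟨hab, lt_of_not_ge h⟩
    have hout : outdeg G a = outdeg (delE G a b) a + 1 := by
      have hset : {w | G a w} = insert b {w | delE G a b a w} := by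
        ext w
        simp only [delE, Set.mem_insert_iff, Set.mem_setOf_eq, true_and, not_and]
        by_cases h : w = b
        · simp [h, hab]
        · simp [h]
      have hnb : b ∉ {w | delE G a b a w} := by
        simp [delE]
      rw [outdeg, outdeg, hset, Set.ncard_insert_of_notMem hnb (Set.toFinite _)]
    set R := reachSet G a with hR
    set R' := reachSet (delE G a b) a with hR'
    have hsub : R' ⊆ R := by
      rintro w ⟨hw1, hw2⟩
      exact ⟨hw1, ReflTransGen.mono (p := G) (fun x y (h : delE G a b x y) => h.1) _ _ hw2⟩
    have hcard : (R \ R').ncard + R'.ncard = R.ncard :=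
      Set.ncard_diff_add_ncard_of_subset hsub (Set.toFinite _)
    have hdiffsub : R \ R' ⊆ {w | ReflTransGen G b w} := by
      rintro w ⟨⟨hwa, hwr⟩, hwn⟩
      rcases reach_del_or a b w hwr with h1 | h1
      · exact absurd ⟨hwa, h1⟩ hwn
      · exact h1
    have hmono : (R \ R').ncard ≤ ({w | ReflTransGen G b w} : Set V).ncard :=
      Set.ncard_le_ncard hdiffsub (Set.toFinite _)
    have hutil : (R'.ncard : ℝ) - c * (outdeg (delE G a b) a : ℝ) ≤
        (R.ncard : ℝ) - c * (outdeg G a : ℝ) := hle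
    rw [hout] at hutil
    push_cast at hutil
    have h1 : c ≤ (R.ncard : ℝ) - (R'.ncard : ℝ) := by linarith
    have h2 : (R.ncard : ℝ) - (R'.ncard : ℝ) = ((R \ R').ncard : ℝ) := by
      have := hcard
      push_cast [← this]
      ring
    calc c ≤ ((R \ R').ncard : ℝ) := by rw [← h2]; exact h1
      _ ≤ _ := by exact_mod_cast hmono
  refine ⟨key, fun a b hab x hx => ?_⟩
  have hsub : {w | ReflTransGen G b w} ⊆ {w | ReflTransGen G x w} := by
    intro w hw
    exact hx.2.trans hw
  calc c ≤ (({w | ReflTransGen G b w} : Set V).ncard : ℝ) := key a b hab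
    _ ≤ _ := by
        exact_mod_cast Set.ncard_le_ncard hsub (Set.toFinite _)
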